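/- Let φ : I → R be a lower semicontinuous pseudoconvex function (with respect to the lower Dini derivative) on an interval I ⊆ R, with nonempty set Î of global minimizers. Then φ is constant on Î, strictly monotone increasing on I₊ = {t ∈ I : t ≥ s for all s ∈ Î}, and strictly monotone decreasing on I₋ = {t ∈ I : t ≤ s for all s ∈ Î}. -/
import Mathlib


open Filter Set

/-- Lower Dini directional derivative of a function of one real variable. -/
noncomputable def dini (φ : ℝ → ℝ) (s u : ℝ) : ℝ :=
  liminf (fun h : ℝ => (φ (s + h * u) - φ s) / h) (nhdsWithin 0 (Ioi 0))

/-- Pseudoconvexity w.r.t. the lower Dini derivative, one variable. -/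
def PseudoconvexOn (φ : ℝ → ℝ) (I : Set ℝ) : Prop :=
  ∀ s ∈ I, ∀ t ∈ I, φ t < φ s → dini φ s (t - s) < 0

/-- A direction `u` is admissible at `s` relative to `I`. -/
def Admissible (I : Set ℝ) (s u : ℝ) : Prop :=
  ∃ δ > 0, ∀ h ∈ Ioo (0:ℝ) δ, s + h * u ∈ I

/-- `s` is a stationary point of `φ` relative to `I`. -/
def Stationary (φ : ℝ → ℝ) (I : Set ℝ) (s : ℝ) : Prop :=
  ∀ u : ℝ, Admissible I s u → 0 ≤ dini φ s u

/-- The set of global minimizers of `φ` over `I`. -/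
def ArgminSet (φ : ℝ → ℝ) (I : Set ℝ) : Set ℝ := {t ∈ I | ∀ s ∈ I, φ t ≤ φ s}

/-- From a negative Dini derivative, get arbitrarily small decrease steps. -/
lemma dini_neg_step {φ : ℝ → ℝ} {s u : ℝ} (h : dini φ s u < 0) :
    ∀ δ > 0, ∃ h' ∈ Ioo (0:ℝ) δ, φ (s + h' * u) < φ s := by
  intro δ hδ
  by_contra hc
  push_neg at hc
  have hmem : Ioo (0:ℝ) δ ∈ nhdsWithin (0:ℝ) (Ioi 0) :=
    Ioo_mem_nhdsGT_of_mem ⟨le_refl 0, hδ⟩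
  have hev : ∀ᶠ x in nhdsWithin (0:ℝ) (Ioi 0),
      (0:ℝ) ≤ (φ (s + x * u) - φ s) / x := by
    filter_upwards [hmem] with x hx
    exact div_nonneg (by linarith [hc x hx]) hx.1.le
  rw [dini, liminf_eq] at h
  set S : Set ℝ := {a | ∀ᶠ x in nhdsWithin (0:ℝ) (Ioi 0), a ≤ (φ (s + x * u) - φ s) / x}
    with hS
  have h0 : (0:ℝ) ∈ S := hev
  by_cases hb : BddAbove S
  · exact absurd (le_csSup hb h0) (not_le.2 h)
  · rw [Real.sSup_of_not_bddAbove hb] at h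
    exact lt_irrefl _ h

/-- Sublevel sets over a closed subinterval are closed for lsc functions. -/
lemma sublevel_closed {φ : ℝ → ℝ} {I : Set ℝ} (hlsc : LowerSemicontinuousOn φ I)
    {a b c : ℝ} (hab : Icc a b ⊆ I) :
    IsClosed {y | y ∈ Icc a b ∧ φ y ≤ c} := by
  set A := {y | y ∈ Icc a b ∧ φ y ≤ c} with hAdef
  apply isClosed_of_closure_subset
  intro y hy
  have hyIcc : y ∈ Icc a b :=
    isClosed_Icc.closure_subset (closure_mono (fun z hz => hz.1) hy)
  refine ⟨hyIcc, ?_⟩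
  by_contra hlt
  push_neg at hlt
  have hw : ∀ᶠ z in nhdsWithin y I, c < φ z := hlsc y (hab hyIcc) c hlt
  have hne : (nhdsWithin y A).NeBot := mem_closure_iff_nhdsWithin_neBot.1 hy
  have hle : nhdsWithin y A ≤ nhdsWithin y I :=
    nhdsWithin_mono y (fun z hz => hab hz.1)
  have h1 : ∀ᶠ z in nhdsWithin y A, c < φ z := hle hw
  have h2 : ∀ᶠ z in nhdsWithin y A, φ z ≤ c :=
    eventually_mem_nhdsWithin.mono (fun z hz => hz.2)
  obtain ⟨z, hz1, hz2⟩ := (h1.and h2).exists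
  linarith

/-- An lsc function attains its minimum on a compact interval. -/
lemma lsc_exists_min {φ : ℝ → ℝ} {I : Set ℝ} (hlsc : LowerSemicontinuousOn φ I)
    {p q : ℝ} (hpq : p ≤ q) (hsub : Icc p q ⊆ I) :
    ∃ m ∈ Icc p q, ∀ y ∈ Icc p q, φ m ≤ φ y := by
  haveI : Nonempty (Icc p q) := ⟨⟨p, le_refl p, hpq⟩⟩
  set Z : Icc p q → Set ℝ := fun y => {z | z ∈ Icc p q ∧ φ z ≤ φ y.1} with hZ
  have hZcl : ∀ y, IsClosed (Z y) := fun y => sublevel_closed hlsc hsub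
  have hZne : ∀ y, (Z y).Nonempty := fun y => ⟨y.1, y.2, le_refl _⟩
  have hZcpt : ∀ y, IsCompact (Z y) :=
    fun y => isCompact_Icc.of_isClosed_subset (hZcl y) (fun z hz => hz.1)
  have hdir : Directed (· ⊇ ·) Z := by
    intro y y'
    rcases le_total (φ y.1) (φ y'.1) with h | h
    · exact ⟨y, fun z hz => hz, fun z hz => ⟨hz.1, hz.2.trans h⟩⟩
    · exact ⟨y', fun z hz => ⟨hz.1, hz.2.trans h⟩, fun z hz => hz⟩
  obtain ⟨m, hm⟩ :=
    IsCompact.nonempty_iInter_of_directed_nonempty_isCompact_isClosed Z hdir hZne hZcpt hZcl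
  simp only [mem_iInter] at hm
  exact ⟨m, (hm ⟨p, le_refl p, hpq⟩).1, fun y hy => (hm ⟨y, hy⟩).2⟩

/-- lsc + pseudoconvex implies quasiconvex. -/
lemma quasi {I : Set ℝ} (hI : I.OrdConnected) {φ : ℝ → ℝ}
    (hlsc : LowerSemicontinuousOn φ I) (hpc : PseudoconvexOn φ I)
    {t s x : ℝ} (ht : t ∈ I) (hs : s ∈ I) (hts : t ≤ s) (hx : x ∈ Icc t s) :
    φ x ≤ max (φ t) (φ s) := by
  by_contra hgt
  push_neg at hgt
  set M := max (φ t) (φ s) with hM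
  have hsub : Icc t s ⊆ I := hI.out ht hs
  set A := {y | y ∈ Icc t s ∧ φ y ≤ M} with hA
  have hAcl : IsClosed A := sublevel_closed hlsc hsub
  have htx : t ≤ x := hx.1
  have hxs : x ≤ s := hx.2
  have hxA : x ∉ A := fun h => absurd h.2 (not_le.2 hgt)
  -- u := largest point of A left of x
  have hA1cl : IsClosed (A ∩ Icc t x) := hAcl.inter isClosed_Icc
  have hA1ne : (A ∩ Icc t x).Nonempty :=
    ⟨t, ⟨⟨le_refl t, hts⟩, le_max_left _ _⟩, le_refl t, htx⟩
  have hA1bdd : BddAbove (A ∩ Icc t x) := ⟨x, fun z hz => hz.2.2⟩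
  have hu : sSup (A ∩ Icc t x) ∈ A ∩ Icc t x := hA1cl.csSup_mem hA1ne hA1bdd
  set u := sSup (A ∩ Icc t x) with hudef
  -- v := smallest point of A right of x
  have hA2cl : IsClosed (A ∩ Icc x s) := hAcl.inter isClosed_Icc
  have hA2ne : (A ∩ Icc x s).Nonempty :=
    ⟨s, ⟨⟨hts, le_refl s⟩, le_max_right _ _⟩, hxs, le_refl s⟩
  have hA2bdd : BddBelow (A ∩ Icc x s) := ⟨x, fun z hz => hz.2.1⟩
  have hv : sInf (A ∩ Icc x s) ∈ A ∩ Icc x s := hA2cl.csInf_mem hA2ne hA2bdd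
  set v := sInf (A ∩ Icc x s) with hvdef
  have hux : u < x := lt_of_le_of_ne hu.2.2 (fun h => hxA (h ▸ hu.1))
  have hxv : x < v := lt_of_le_of_ne hv.2.1 (fun h => hxA (by rw [h]; exact hv.1))
  have huv : u < v := hux.trans hxv
  -- everything in (u, v) is above M
  have hmid : ∀ y ∈ Ioo u v, M < φ y := by
    intro y hy
    by_contra hyM
    push_neg at hyM
    have hyIcc : y ∈ Icc t s := ⟨hu.2.1.trans hy.1.le, hy.2.le.trans hv.2.2⟩
    have hyA : y ∈ A := ⟨hyIcc, hyM⟩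
    rcases lt_trichotomy y x with h | h | h
    · exact absurd (le_csSup hA1bdd ⟨hyA, hyIcc.1, h.le⟩) (not_le.2 hy.1)
    · exact hxA (h ▸ hyA)
    · exact absurd (csInf_le hA2bdd ⟨hyA, h.le, hyIcc.2⟩) (not_le.2 hy.2)
  -- pick a compact interval strictly inside (u, v)
  set p := u + (v - u) / 3 with hp
  set q := v - (v - u) / 3 with hq
  have hup : u < p := by rw [hp]; linarith
  have hpq : p < q := by rw [hp, hq]; linarith
  have hqv : q < v := by rw [hq]; linarith
  have hpqI : Icc p q ⊆ I := fun z hz =>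
    hsub ⟨hu.2.1.trans (hup.le.trans hz.1), (hz.2.trans hqv.le).trans hv.2.2⟩
  obtain ⟨m, hmIcc, hmmin⟩ := lsc_exists_min hlsc hpq.le hpqI
  have hmuv : m ∈ Ioo u v := ⟨hup.trans_le hmIcc.1, hmIcc.2.trans_lt hqv⟩
  have hmM : M < φ m := hmid m hmuv
  have hmI : m ∈ I := hpqI hmIcc
  have huI : u ∈ I := hsub ⟨hu.2.1, hu.2.2.trans hxs⟩
  have hvI : v ∈ I := hsub ⟨htx.trans hv.2.1, hv.2.2⟩
  rcases lt_or_eq_of_le hmIcc.2 with hmq | hmq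
  · -- m < q : decrease towards v
    have hφv : φ v < φ m := lt_of_le_of_lt hv.1.2 hmM
    have hd : dini φ m (v - m) < 0 := hpc m hmI v hvI hφv
    have hvm : (0:ℝ) < v - m := by linarith [hmuv.2]
    obtain ⟨h', hh', hdec⟩ := dini_neg_step hd ((q - m) / (v - m))
      (div_pos (by linarith) hvm)
    have hz1 : m < m + h' * (v - m) := by nlinarith [hh'.1]
    have hkey : h' * (v - m) < q - m := (lt_div_iff₀ hvm).1 hh'.2
    have hz2 : m + h' * (v - m) < q := by linarith
    exact absurd (hmmin _ ⟨hmIcc.1.trans hz1.le, hz2.le⟩) (not_le.2 hdec)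
  · -- m = q : decrease towards u
    have hφu : φ u < φ m := lt_of_le_of_lt hu.1.2 hmM
    have hd : dini φ m (u - m) < 0 := hpc m hmI u huI hφu
    have hmu : (0:ℝ) < m - u := by linarith [hmuv.1]
    obtain ⟨h', hh', hdec⟩ := dini_neg_step hd ((q - p) / (m - u))
      (div_pos (by linarith) hmu)
    have hkey : h' * (m - u) < q - p := (lt_div_iff₀ hmu).1 hh'.2
    have hz1 : p < m + h' * (u - m) := by nlinarith [hh'.1]
    have hz2 : m + h' * (u - m) < q := by nlinarith [hh'.1]
    exact absurd (hmmin _ ⟨hz1.le, hz2.le⟩) (not_le.2 hdec)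

theorem stmt5 (I : Set ℝ) (hI : I.OrdConnected) (φ : ℝ → ℝ)
    (hlsc : LowerSemicontinuousOn φ I) (hpc : PseudoconvexOn φ I)
    (hne : (ArgminSet φ I).Nonempty) :
    (∀ a ∈ ArgminSet φ I, ∀ b ∈ ArgminSet φ I, φ a = φ b) ∧
    StrictMonoOn φ {t ∈ I | ∀ s ∈ ArgminSet φ I, s ≤ t} ∧
    StrictAntiOn φ {t ∈ I | ∀ s ∈ ArgminSet φ I, t ≤ s} := by
  obtain ⟨a, haI, hamin⟩ := hne
  refine ⟨fun b hb c hc => le_antisymm (hb.2 c hc.1) (hc.2 b hb.1), ?_, ?_⟩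
  · -- strict mono on the right of the minimizers
    intro t₁ h₁ t₂ h₂ h12
    have ha1 : a ≤ t₁ := h₁.2 a ⟨haI, hamin⟩
    by_contra hcon
    push_neg at hcon  -- φ t₂ ≤ φ t₁
    rcases lt_or_eq_of_le (hamin t₁ h₁.1) with halt | haeq
    · -- φ a < φ t₁
      have hsub : Icc a t₂ ⊆ I := hI.out haI h₂.1
      have hq : φ t₁ ≤ max (φ a) (φ t₂) :=
        quasi hI hlsc hpc haI h₂.1 (ha1.trans h12.le) ⟨ha1, h12.le⟩
      have hmax : max (φ a) (φ t₂) = φ t₂ := max_eq_right (hamin t₂ h₂.1)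
      have heq : φ t₁ = φ t₂ := le_antisymm (hmax ▸ hq) hcon
      have hat2 : φ a < φ t₂ := heq ▸ halt
      have hd : dini φ t₂ (a - t₂) < 0 := hpc t₂ h₂.1 a haI hat2
      have hat2' : a < t₂ := ha1.trans_lt h12
      obtain ⟨h', hh', hdec⟩ := dini_neg_step hd ((t₂ - t₁) / (t₂ - a))
        (div_pos (by linarith) (by linarith))
      set z := t₂ + h' * (a - t₂) with hz
      have hkey : h' * (t₂ - a) < t₂ - t₁ := (lt_div_iff₀ (by linarith)).1 hh'.2
      have hz1 : t₁ < z := by rw [hz]; nlinarith [hh'.1]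
      have hz2 : z < t₂ := by rw [hz]; nlinarith [hh'.1]
      have hzI : z ∈ I := hsub ⟨by linarith, hz2.le⟩
      have hq2 : φ t₁ ≤ max (φ a) (φ z) :=
        quasi hI hlsc hpc haI hzI (by linarith) ⟨ha1, hz1.le⟩
      have : max (φ a) (φ z) = φ z := max_eq_right (hamin z hzI)
      rw [this] at hq2
      linarith [heq ▸ hdec]
    · -- φ a = φ t₁ : then t₂ is also a minimizer, contradiction with order
      have ht2min : t₂ ∈ ArgminSet φ I := by
        refine ⟨h₂.1, fun w hw => ?_⟩
        have : φ a ≤ φ t₂ := hamin t₂ h₂.1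
        have : φ t₂ = φ a := le_antisymm (by linarith [haeq]) this
        rw [this]; exact hamin w hw
      have := h₁.2 t₂ ht2min
      linarith
  · -- strict anti on the left of the minimizers
    intro t₁ h₁ t₂ h₂ h12
    have ha2 : t₂ ≤ a := h₂.2 a ⟨haI, hamin⟩
    by_contra hcon
    push_neg at hcon  -- φ t₁ ≤ φ t₂
    rcases lt_or_eq_of_le (hamin t₂ h₂.1) with halt | haeq
    · -- φ a < φ t₂
      have hsub : Icc t₁ a ⊆ I := hI.out h₁.1 haI
      have hq : φ t₂ ≤ max (φ t₁) (φ a) :=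
        quasi hI hlsc hpc h₁.1 haI (h12.le.trans ha2) ⟨h12.le, ha2⟩
      have hmax : max (φ t₁) (φ a) = φ t₁ := max_eq_left (hamin t₁ h₁.1)
      have heq : φ t₂ = φ t₁ := le_antisymm (hmax ▸ hq) hcon
      have hat1 : φ a < φ t₁ := heq ▸ halt
      have hd : dini φ t₁ (a - t₁) < 0 := hpc t₁ h₁.1 a haI hat1
      have hat1' : t₁ < a := h12.trans_le ha2
      obtain ⟨h', hh', hdec⟩ := dini_neg_step hd ((t₂ - t₁) / (a - t₁))
        (div_pos (by linarith) (by linarith))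
      set z := t₁ + h' * (a - t₁) with hz
      have hkey : h' * (a - t₁) < t₂ - t₁ := (lt_div_iff₀ (by linarith)).1 hh'.2
      have hz1 : t₁ < z := by rw [hz]; nlinarith [hh'.1]
      have hz2 : z < t₂ := by rw [hz]; linarith
      have hzI : z ∈ I := hsub ⟨hz1.le, by linarith⟩
      have hq2 : φ t₂ ≤ max (φ z) (φ a) :=
        quasi hI hlsc hpc hzI haI (by linarith) ⟨hz2.le, ha2⟩
      have : max (φ z) (φ a) = φ z := max_eq_left (hamin z hzI)
      rw [this] at hq2
      linarith [heq ▸ hdec]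
    · -- φ a = φ t₂ : then t₁ is also a minimizer, contradiction
      have ht1min : t₁ ∈ ArgminSet φ I := by
        refine ⟨h₁.1, fun w hw => ?_⟩
        have h1 : φ a ≤ φ t₁ := hamin t₁ h₁.1
        have : φ t₁ = φ a := le_antisymm (by linarith [haeq]) h1
        rw [this]; exact hamin w hw
      have := h₂.2 t₁ ht1min
      linarith
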